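/- Let $d > 2$ be an integer and $\theta > 0$ with $\theta \ne 1$. Define $h_2(x) = (d/(1-\theta) - 1)x^{-1/\theta + 1} - (d-1)x^{-1/\theta} + x - (d\theta/(1-\theta) + 1)$ for $x \in (1,\infty)$. Then $h_2$ has a unique root on $(1,\infty)$. -/

import Mathlib

open Set Filter Real

theorem stmt_8 (d : ℕ) (hd : 2 < d) (θ : ℝ) (hθ : 0 < θ) (hθ1 : θ ≠ 1) :
    ∃! x : ℝ, x ∈ Set.Ioi (1:ℝ) ∧
      ((d : ℝ) / (1 - θ) - 1) * x ^ (-1 / θ + 1) - ((d : ℝ) - 1) * x ^ (-1 / θ)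
        + x - ((d : ℝ) * θ / (1 - θ) + 1) = 0 := by
  have hθ0 : θ ≠ 0 := ne_of_gt hθ
  have h1θ : (1:ℝ) - θ ≠ 0 := sub_ne_zero.2 (Ne.symm hθ1)
  have hd3 : (3:ℝ) ≤ (d:ℝ) := by exact_mod_cast hd
  set C₁ : ℝ := (d : ℝ) / (1 - θ) - 1 with hC₁_def
  set C₂ : ℝ := (d : ℝ) * θ / (1 - θ) + 1 with hC₂_def
  set a : ℝ := (d : ℝ) - 1 with ha_def
  have ha : 1 < a := by rw [ha_def]; linarith
  set c : ℝ := (a + θ) / θ with hc_def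
  set f : ℝ → ℝ := fun x => C₁ * x ^ (-1 / θ + 1) - a * x ^ (-1 / θ) + x - C₂ with hf_def
  set g : ℝ → ℝ := fun x => x ^ (1 + 1/θ) - c * x + a / θ with hg_def
  set g' : ℝ → ℝ := fun x => (1 + 1/θ) * x ^ (1/θ) - c with hg'_def
  have hθinv : (0:ℝ) < 1/θ := by positivity
  -- derivative of g
  have hg_deriv : ∀ x : ℝ, 0 < x → HasDerivAt g (g' x) x := by
    intro x hx
    have h1 : HasDerivAt (fun y : ℝ => y ^ (1 + 1/θ)) ((1 + 1/θ) * x ^ ((1 + 1/θ) - 1)) x :=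
      Real.hasDerivAt_rpow_const (Or.inl (ne_of_gt hx))
    rw [show (1 + 1/θ) - 1 = 1/θ by ring] at h1
    have h2 : HasDerivAt (fun y : ℝ => c * y) (c * 1) x := (hasDerivAt_id x).const_mul c
    rw [mul_one] at h2
    exact (h1.sub h2).add_const (a/θ)
  -- g' strictly increasing on positives
  have hg'_mono : ∀ x y : ℝ, 0 < x → x < y → g' x < g' y := by
    intro x y hx hxy
    have h1 : x ^ (1/θ) < y ^ (1/θ) := Real.rpow_lt_rpow (le_of_lt hx) hxy hθinv
    have h2 : (0:ℝ) < 1 + 1/θ := by positivity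
    simp only [hg'_def]
    nlinarith
  have hg'1 : g' 1 < 0 := by
    simp only [hg'_def, Real.one_rpow, mul_one]
    have key : 1 + 1/θ - c = (1 - a)/θ := by rw [hc_def]; field_simp; ring
    have : (1 - a)/θ < 0 := div_neg_of_neg_of_pos (by linarith) hθ
    linarith
  have hg'_top : Tendsto g' atTop atTop := by
    have h1 : Tendsto (fun x:ℝ => x ^ (1/θ)) atTop atTop := tendsto_rpow_atTop hθinv
    have h2 : Tendsto (fun x:ℝ => (1 + 1/θ) * x ^ (1/θ)) atTop atTop :=
      h1.const_mul_atTop (by positivity)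
    have h3 := tendsto_atTop_add_const_right atTop (-c) h2
    exact h3.congr (fun x => by rw [hg'_def]; ring)
  obtain ⟨B, hB0, hB1⟩ : ∃ B : ℝ, 0 < g' B ∧ 1 < B :=
    ((hg'_top.eventually_gt_atTop 0).and (eventually_gt_atTop 1)).exists
  -- continuity
  have hg_cont : Continuous g := by
    have : Continuous fun x : ℝ => x ^ (1 + 1/θ) :=
      continuous_iff_continuousAt.2 fun x => Real.continuousAt_rpow_const x _ (Or.inr (by positivity))
    exact (this.sub (continuous_const.mul continuous_id)).add continuous_const
  have hg'_cont : Continuous g' := by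
    have : Continuous fun x : ℝ => x ^ (1/θ) :=
      continuous_iff_continuousAt.2 fun x => Real.continuousAt_rpow_const x _ (Or.inr (by positivity))
    exact (continuous_const.mul this).sub continuous_const
  -- root of g'
  obtain ⟨t, htmem, ht⟩ : ∃ t ∈ Icc (1:ℝ) B, g' t = 0 := by
    have h := intermediate_value_Icc (le_of_lt hB1) hg'_cont.continuousOn
      (⟨le_of_lt hg'1, le_of_lt hB0⟩ : (0:ℝ) ∈ Icc (g' 1) (g' B))
    obtain ⟨t, h1, h2⟩ := h
    exact ⟨t, h1, h2⟩
  have ht1 : 1 < t := by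
    rcases lt_or_eq_of_le htmem.1 with h | h
    · exact h
    · exfalso; rw [← h] at ht; linarith
  have ht0 : 0 < t := by linarith
  -- g monotonicity
  have hg_anti : StrictAntiOn g (Icc 1 t) := by
    apply strictAntiOn_of_deriv_neg (convex_Icc 1 t) hg_cont.continuousOn
    intro x hx
    rw [interior_Icc] at hx
    rw [(hg_deriv x (by linarith [hx.1])).deriv]
    have := hg'_mono x t (by linarith [hx.1]) hx.2
    linarith [ht ▸ this]
  have hg_mono : StrictMonoOn g (Ici t) := by
    apply strictMonoOn_of_deriv_pos (convex_Ici t) hg_cont.continuousOn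
    intro x hx
    rw [interior_Ici] at hx
    have hx' : t < x := hx
    rw [(hg_deriv x (lt_trans ht0 hx')).deriv]
    have := hg'_mono t x ht0 hx'
    linarith [ht ▸ this]
  have hg1 : g 1 = 0 := by
    simp only [hg_def, Real.one_rpow, mul_one, hc_def]
    field_simp
    ring
  have hgt : g t < 0 := by
    have := hg_anti ⟨le_rfl, le_of_lt ht1⟩ ⟨le_of_lt ht1, le_rfl⟩ ht1
    rw [hg1] at this; exact this
  -- g tends to infinity
  have hg_top : Tendsto g atTop atTop := by
    have h1 : Tendsto (fun x:ℝ => x ^ (1/θ) - c) atTop atTop := by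
      have := tendsto_atTop_add_const_right atTop (-c) (tendsto_rpow_atTop hθinv)
      exact this.congr fun x => by ring
    have h2 : Tendsto (fun x:ℝ => x * (x ^ (1/θ) - c)) atTop atTop :=
      tendsto_id.atTop_mul_atTop₀ h1
    have h3 := tendsto_atTop_add_const_right atTop (a/θ) h2
    apply h3.congr'
    filter_upwards [eventually_gt_atTop (0:ℝ)] with x hx
    simp only [hg_def]
    rw [Real.rpow_add hx 1 (1/θ), Real.rpow_one]
    ring
  obtain ⟨M, hM0, hMt⟩ : ∃ M : ℝ, 0 < g M ∧ t < M :=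
    ((hg_top.eventually_gt_atTop 0).and (eventually_gt_atTop t)).exists
  obtain ⟨x₁, hx₁mem, hgx₁⟩ : ∃ x₁ ∈ Icc t M, g x₁ = 0 := by
    have h := intermediate_value_Icc (le_of_lt hMt) hg_cont.continuousOn
      (⟨le_of_lt hgt, le_of_lt hM0⟩ : (0:ℝ) ∈ Icc (g t) (g M))
    obtain ⟨x₁, h1, h2⟩ := h
    exact ⟨x₁, h1, h2⟩
  have hx₁t : t < x₁ := by
    rcases lt_or_eq_of_le hx₁mem.1 with h | h
    · exact h
    · exfalso; rw [← h] at hgx₁; linarith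
  have hx₁1 : 1 < x₁ := lt_trans ht1 hx₁t
  have hx₁0 : 0 < x₁ := by linarith
  -- sign of g
  have hg_neg : ∀ x : ℝ, 1 < x → x < x₁ → g x < 0 := by
    intro x hx1 hxx₁
    rcases le_or_gt x t with h | h
    · have := hg_anti ⟨le_rfl, le_of_lt ht1⟩ ⟨le_of_lt hx1, h⟩ hx1
      rw [hg1] at this; exact this
    · have := hg_mono (le_of_lt h) hx₁mem.1 hxx₁
      rw [hgx₁] at this; exact this
  have hg_pos : ∀ x : ℝ, x₁ < x → 0 < g x := by
    intro x h
    have := hg_mono hx₁mem.1 (le_trans hx₁mem.1 (le_of_lt h)) h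
    rw [hgx₁] at this; exact this
  -- coefficient identity
  have hC₁c : C₁ * (-1/θ + 1) = -c := by
    rw [hC₁_def, hc_def, ha_def]
    field_simp
    ring
  -- derivative of f
  have hf_deriv : ∀ x : ℝ, 0 < x → HasDerivAt f (x ^ (-1/θ - 1) * g x) x := by
    intro x hx
    have hxne : x ≠ 0 := ne_of_gt hx
    have h1 : HasDerivAt (fun y : ℝ => y ^ (-1/θ + 1)) ((-1/θ + 1) * x ^ ((-1/θ + 1) - 1)) x :=
      Real.hasDerivAt_rpow_const (Or.inl hxne)
    have h2 : HasDerivAt (fun y : ℝ => y ^ (-1/θ)) ((-1/θ) * x ^ ((-1/θ) - 1)) x :=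
      Real.hasDerivAt_rpow_const (Or.inl hxne)
    have h3 := (((h1.const_mul C₁).sub (h2.const_mul a)).add (hasDerivAt_id x)).sub_const C₂
    have hval : C₁ * ((-1/θ + 1) * x ^ ((-1/θ + 1) - 1)) - a * ((-1/θ) * x ^ ((-1/θ) - 1)) + 1
        = x ^ (-1/θ - 1) * g x := by
      have e1 : x ^ ((-1/θ + 1) - 1) = x ^ (-1/θ) := by norm_num
      have e2 : x ^ ((-1/θ) - 1) = x ^ (-1/θ) / x := Real.rpow_sub_one hxne _
      have e3 : x ^ (-1/θ - 1) = x ^ (-1/θ) / x := Real.rpow_sub_one hxne _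
      have e4 : x ^ ((1:ℝ) + 1/θ) = x * x ^ (1/θ) := by
        rw [Real.rpow_add hx, Real.rpow_one]
      have e5 : x ^ (1/θ) * x ^ (-1/θ) = 1 := by
        rw [← Real.rpow_add hx, show (1/θ + -1/θ : ℝ) = 0 by ring, Real.rpow_zero]
      simp only [hg_def]
      rw [e1, e2, e4]
      have hxinv : x * x⁻¹ = 1 := mul_inv_cancel₀ hxne
      linear_combination x ^ (-1/θ) * hC₁c - e5
        + (c * x ^ (-1/θ) - x ^ (-1/θ) * x ^ (1/θ)) * hxinv
    rw [hval] at h3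
    exact h3
  have hf1 : f 1 = 0 := by
    simp only [hf_def, Real.one_rpow, mul_one, hC₁_def, hC₂_def, ha_def]
    field_simp
    ring
  have hf_cont : ∀ s : Set ℝ, s ⊆ Ioi 0 → ContinuousOn f s := by
    intro s hs x hx
    exact ((hf_deriv x (hs hx)).continuousAt).continuousWithinAt
  have hf_anti : StrictAntiOn f (Icc 1 x₁) := by
    apply strictAntiOn_of_deriv_neg (convex_Icc 1 x₁)
      (hf_cont _ (fun x hx => lt_of_lt_of_le one_pos hx.1))
    intro x hx
    rw [interior_Icc] at hx
    have hx0 : (0:ℝ) < x := lt_trans one_pos hx.1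
    rw [(hf_deriv x hx0).deriv]
    exact mul_neg_of_pos_of_neg (Real.rpow_pos_of_pos hx0 _) (hg_neg x hx.1 hx.2)
  have hf_mono : StrictMonoOn f (Ici x₁) := by
    apply strictMonoOn_of_deriv_pos (convex_Ici x₁)
      (hf_cont _ (fun x hx => lt_of_lt_of_le hx₁0 hx))
    intro x hx
    rw [interior_Ici] at hx
    have hx0 : (0:ℝ) < x := lt_trans hx₁0 hx
    rw [(hf_deriv x hx0).deriv]
    exact mul_pos (Real.rpow_pos_of_pos hx0 _) (hg_pos x hx)
  have hfx₁ : f x₁ < 0 := by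
    have := hf_anti ⟨le_rfl, le_of_lt hx₁1⟩ ⟨le_of_lt hx₁1, le_rfl⟩ hx₁1
    rw [hf1] at this; exact this
  -- f tends to infinity
  have hf_top : Tendsto f atTop atTop := by
    have l1 : Tendsto (fun x:ℝ => x ^ (-1/θ)) atTop (nhds 0) := by
      have := tendsto_rpow_neg_atTop hθinv
      exact this.congr fun x => by rw [neg_div]
    have l2 : Tendsto (fun x:ℝ => x ^ (-1/θ - 1)) atTop (nhds 0) := by
      have := tendsto_rpow_neg_atTop (show (0:ℝ) < 1/θ + 1 by positivity)
      exact this.congr fun x => by rw [show -(1/θ + 1) = -1/θ - 1 by ring]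
    have l3 : Tendsto (fun x:ℝ => (x:ℝ)⁻¹) atTop (nhds 0) := tendsto_inv_atTop_zero
    have hb : Tendsto (fun x:ℝ => C₁ * x ^ (-1/θ) - a * x ^ (-1/θ - 1) + 1 - C₂ * x⁻¹)
        atTop (nhds 1) := by
      have := ((((l1.const_mul C₁).sub (l2.const_mul a)).add_const 1).sub (l3.const_mul C₂))
      simpa using this
    have hx := Filter.Tendsto.atTop_mul_pos (show (0:ℝ) < 1 by norm_num) tendsto_id hb
    apply hx.congr'
    filter_upwards [eventually_gt_atTop (0:ℝ)] with x hx0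
    have hxne : x ≠ 0 := ne_of_gt hx0
    have hxinv : x * x⁻¹ = 1 := mul_inv_cancel₀ hxne
    simp only [hf_def, id_eq]
    rw [Real.rpow_add_one hxne (-1/θ), Real.rpow_sub_one hxne (-1/θ)]
    linear_combination (-(a * x ^ (-1/θ)) - C₂) * hxinv
  obtain ⟨N, hN0, hNx₁⟩ : ∃ N : ℝ, 0 < f N ∧ x₁ < N :=
    ((hf_top.eventually_gt_atTop 0).and (eventually_gt_atTop x₁)).exists
  obtain ⟨x₂, hx₂mem, hfx₂⟩ : ∃ x₂ ∈ Icc x₁ N, f x₂ = 0 := by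
    have h := intermediate_value_Icc (le_of_lt hNx₁)
      (hf_cont _ (fun x hx => lt_of_lt_of_le hx₁0 hx.1))
      (⟨le_of_lt hfx₁, le_of_lt hN0⟩ : (0:ℝ) ∈ Icc (f x₁) (f N))
    obtain ⟨x₂, h1, h2⟩ := h
    exact ⟨x₂, h1, h2⟩
  have hx₂x₁ : x₁ < x₂ := by
    rcases lt_or_eq_of_le hx₂mem.1 with h | h
    · exact h
    · exfalso; rw [← h] at hfx₂; linarith
  refine ⟨x₂, ⟨lt_trans hx₁1 hx₂x₁, hfx₂⟩, ?_⟩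
  rintro y ⟨hy1, hy0⟩
  have hy1' : (1:ℝ) < y := hy1
  have hy0' : f y = 0 := hy0
  rcases le_or_gt y x₁ with h | h
  · exfalso
    have := hf_anti ⟨le_rfl, le_of_lt hx₁1⟩ ⟨le_of_lt hy1', h⟩ hy1'
    rw [hf1, hy0'] at this
    exact lt_irrefl 0 this
  · exact hf_mono.injOn (le_of_lt h) (le_of_lt hx₂x₁) (hy0'.trans hfx₂.symm)
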